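/- Let n ≥ 2 and ℓ ≥ 0 be integers. Then the number of (n+1)-tuples m = (m_0,…,m_n) of nonnegative integers with m_0 + ⋯ + m_n = ℓ and m_{2j} = m_{2j+1} for every j ≥ 0 with 2j+1 ≤ n equals ∑ (−1)^{m_1 + m_3 + m_5 + ⋯}, where the sum runs over all (n+1)-tuples m of nonnegative integers with m_0 + ⋯ + m_n = ℓ and the exponent is the sum of the entries m_i with i odd. (This is the cyclic sieving phenomenon of type C_n^{(1)}.) -/

import Mathlib

open Finset

namespace CSPaux

open scoped Classical

noncomputable def Bx (k ℓ : ℕ) : ℤ :=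
  ∑ m ∈ Finset.Nat.antidiagonalTuple k ℓ,
    (-1 : ℤ) ^ (∑ i ∈ Finset.univ.filter (fun i : Fin k => (i : ℕ) % 2 = 1), m i)

def Sym (k : ℕ) (m : Fin k → ℕ) : Prop :=
  ∀ j : Fin k, ∀ h : 2 * (j : ℕ) + 1 < k, m ⟨2 * (j : ℕ), by omega⟩ = m ⟨2 * (j : ℕ) + 1, h⟩

noncomputable def Ax (k ℓ : ℕ) : ℤ :=
  ((Finset.Nat.antidiagonalTuple k ℓ).filter (Sym k)).card

lemma sum_adt_succ {M : Type*} [AddCommMonoid M] (k ℓ : ℕ) (f : (Fin (k + 1) → ℕ) → M) :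
    ∑ m ∈ Finset.Nat.antidiagonalTuple (k + 1) ℓ, f m
      = ∑ p ∈ Finset.HasAntidiagonal.antidiagonal ℓ, ∑ t ∈ Finset.Nat.antidiagonalTuple k p.2,
          f (Fin.cons p.1 t) := by
  rw [Finset.sum_sigma']
  apply Finset.sum_nbij' (i := fun m => (⟨(m 0, ∑ i, Fin.tail m i), Fin.tail m⟩ :
      Σ p : ℕ × ℕ, Fin k → ℕ)) (j := fun x => Fin.cons x.1.1 x.2)
  · intro m hm
    simp only [Finset.Nat.mem_antidiagonalTuple, Fin.sum_univ_succ] at hm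
    simp only [Finset.mem_sigma, Finset.HasAntidiagonal.mem_antidiagonal, Finset.Nat.mem_antidiagonalTuple]
    exact ⟨hm, trivial⟩
  · intro x hx
    simp only [Finset.mem_sigma, Finset.HasAntidiagonal.mem_antidiagonal, Finset.Nat.mem_antidiagonalTuple] at hx
    simp only [Finset.Nat.mem_antidiagonalTuple, Fin.sum_cons, hx.2, hx.1]
  · intro m hm
    simp [Fin.cons_self_tail]
  · intro x hx
    simp only [Finset.mem_sigma, Finset.HasAntidiagonal.mem_antidiagonal, Finset.Nat.mem_antidiagonalTuple] at hx
    refine Sigma.ext ?_ ?_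
    · simp [Fin.cons_zero, Fin.tail_cons, hx.2, Prod.ext_iff]
    · simp [Fin.tail_cons]
  · intro m hm
    simp [Fin.cons_self_tail]

lemma oddsum_cons (k : ℕ) (a b : ℕ) (t : Fin k → ℕ) :
    (∑ i ∈ Finset.univ.filter (fun i : Fin (k + 2) => (i : ℕ) % 2 = 1),
        (Fin.cons a (Fin.cons b t)) i)
      = b + ∑ i ∈ Finset.univ.filter (fun i : Fin k => (i : ℕ) % 2 = 1), t i := by
  rw [Finset.sum_filter, Finset.sum_filter, Fin.sum_univ_succ, Fin.sum_univ_succ]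
  simp only [Fin.cons_zero, Fin.cons_succ, Fin.val_zero, Fin.val_succ, Fin.val_zero]
  norm_num
  congr 1
  funext i
  have h2 : ((i : ℕ) + 1 + 1) % 2 = (i : ℕ) % 2 := by omega
  rw [h2]

lemma sym_cons (k : ℕ) (a b : ℕ) (t : Fin k → ℕ) :
    Sym (k + 2) (Fin.cons a (Fin.cons b t)) ↔ a = b ∧ Sym k t := by
  constructor
  · intro h
    constructor
    · have := h ⟨0, by omega⟩ (by simp)
      simpa using this
    · intro j hj
      have hjk : 2 * (j : ℕ) + 1 < k := hj
      have := h ⟨(j : ℕ) + 1, by omega⟩ (by simp; omega)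
      simp only at this
      have e1 : (⟨2 * ((j : ℕ) + 1), by omega⟩ : Fin (k + 2))
          = Fin.succ (Fin.succ ⟨2 * (j : ℕ), by omega⟩) := by
        apply Fin.ext; simp [Fin.val_succ]; omega
      have e2 : (⟨2 * ((j : ℕ) + 1) + 1, by omega⟩ : Fin (k + 2))
          = Fin.succ (Fin.succ ⟨2 * (j : ℕ) + 1, by omega⟩) := by
        apply Fin.ext; simp [Fin.val_succ]; omega
      rw [e1, e2] at this
      simpa only [Fin.cons_succ] using this
  · rintro ⟨rfl, h⟩
    intro j hj
    rcases Nat.eq_zero_or_pos (j : ℕ) with h0 | h0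
    · have e1 : (⟨2 * (j : ℕ), by omega⟩ : Fin (k + 2)) = 0 := by
        apply Fin.ext; simp [h0]
      have e2 : (⟨2 * (j : ℕ) + 1, hj⟩ : Fin (k + 2)) = Fin.succ 0 := by
        apply Fin.ext; simp [h0]
      rw [e1, e2]
      simp
    · obtain ⟨j', rfl'⟩ : ∃ j' : ℕ, (j : ℕ) = j' + 1 := ⟨(j : ℕ) - 1, by omega⟩
      have hj' : 2 * j' + 1 < k := by omega
      have e1 : (⟨2 * (j : ℕ), by omega⟩ : Fin (k + 2))
          = Fin.succ (Fin.succ ⟨2 * j', by omega⟩) := by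
        apply Fin.ext; simp [Fin.val_succ]; omega
      have e2 : (⟨2 * (j : ℕ) + 1, hj⟩ : Fin (k + 2))
          = Fin.succ (Fin.succ ⟨2 * j' + 1, hj'⟩) := by
        apply Fin.ext; simp [Fin.val_succ]; omega
      rw [e1, e2]
      simp only [Fin.cons_succ]
      exact h ⟨j', by omega⟩ hj'

lemma sum_diag (s : ℕ) :
    (∑ q ∈ Finset.HasAntidiagonal.antidiagonal s, if q.1 = q.2 then (1 : ℤ) else 0)
      = if Even s then 1 else 0 := by
  by_cases hs : Even s
  · obtain ⟨t, rfl⟩ := hs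
    rw [if_pos (by exact ⟨t, rfl⟩)]
    rw [Finset.sum_eq_single_of_mem (t, t) (by simp)]
    · simp
    · intro q hq hne
      simp only [Finset.HasAntidiagonal.mem_antidiagonal] at hq
      by_cases h : q.1 = q.2
      · exact absurd (Prod.ext_iff.mpr ⟨by omega, by omega⟩) hne
      · simp [h]
  · rw [if_neg hs]
    apply Finset.sum_eq_zero
    intro q hq
    simp only [Finset.HasAntidiagonal.mem_antidiagonal] at hq
    by_cases h : q.1 = q.2
    · exact absurd ⟨q.1, by omega⟩ hs
    · simp [h]

lemma sum_sign (s : ℕ) :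
    (∑ q ∈ Finset.HasAntidiagonal.antidiagonal s, (-1 : ℤ) ^ q.1) = if Even s then 1 else 0 := by
  rw [Finset.Nat.sum_antidiagonal_eq_sum_range_succ_mk]
  rw [neg_one_geom_sum]
  by_cases h : Even s
  · simp [Nat.even_add_one, h]
  · simp [Nat.even_add_one, h]

lemma reassoc (ℓ : ℕ) (F : ℕ → ℕ → ℕ → ℤ) :
    (∑ p ∈ Finset.HasAntidiagonal.antidiagonal ℓ, ∑ q ∈ Finset.HasAntidiagonal.antidiagonal p.2, F p.1 q.1 q.2)
      = ∑ p ∈ Finset.HasAntidiagonal.antidiagonal ℓ, ∑ q ∈ Finset.HasAntidiagonal.antidiagonal p.1, F q.1 q.2 p.2 := by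
  rw [Finset.sum_sigma', Finset.sum_sigma']
  apply Finset.sum_nbij' (i := fun x => (⟨(x.1.1 + x.2.1, x.2.2), (x.1.1, x.2.1)⟩ :
      Σ p : ℕ × ℕ, ℕ × ℕ)) (j := fun x => ⟨(x.2.1, x.2.2 + x.1.2), (x.2.2, x.1.2)⟩)
  · intro x hx
    simp only [Finset.mem_sigma, Finset.HasAntidiagonal.mem_antidiagonal] at hx ⊢
    exact ⟨by omega, trivial⟩
  · intro x hx
    simp only [Finset.mem_sigma, Finset.HasAntidiagonal.mem_antidiagonal] at hx ⊢
    exact ⟨by omega, trivial⟩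
  · intro x hx
    simp only [Finset.mem_sigma, Finset.HasAntidiagonal.mem_antidiagonal] at hx
    refine Sigma.ext ?_ ?_ <;> simp [Prod.ext_iff] <;> omega
  · intro x hx
    simp only [Finset.mem_sigma, Finset.HasAntidiagonal.mem_antidiagonal] at hx
    refine Sigma.ext ?_ ?_ <;> simp [Prod.ext_iff] <;> omega
  · intro x hx
    rfl

lemma sum_sign2 (s : ℕ) :
    (∑ q ∈ Finset.HasAntidiagonal.antidiagonal s, (-1 : ℤ) ^ q.2) = if Even s then 1 else 0 := by
  rw [← Finset.HasAntidiagonal.map_swap_antidiagonal, Finset.sum_map]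
  simpa using sum_sign s

lemma key0 (ℓ : ℕ) : Ax 0 ℓ = Bx 0 ℓ := by
  cases ℓ with
  | zero =>
    have hs : Sym 0 ![] := fun j => j.elim0
    rw [Ax, Bx, Finset.Nat.antidiagonalTuple_zero_zero]
    rw [Finset.filter_singleton, if_pos hs]
    simp
  | succ n =>
    rw [Ax, Bx, Finset.Nat.antidiagonalTuple_zero_succ]
    simp

lemma key1 (ℓ : ℕ) : Ax 1 ℓ = Bx 1 ℓ := by
  have hs : Sym 1 ![ℓ] := fun j h => absurd h (by omega)
  have hf : (Finset.univ.filter (fun i : Fin 1 => (i : ℕ) % 2 = 1)) = ∅ := by decide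
  rw [Ax, Bx, Finset.Nat.antidiagonalTuple_one]
  rw [Finset.filter_singleton, if_pos hs]
  simp [hf]

lemma step (k ℓ : ℕ) (IH : ∀ r, Ax k r = Bx k r) : Ax (k + 2) ℓ = Bx (k + 2) ℓ := by
  have hA : Ax (k + 2) ℓ = ∑ p ∈ Finset.HasAntidiagonal.antidiagonal ℓ, ∑ q ∈ Finset.HasAntidiagonal.antidiagonal p.2,
      (if p.1 = q.1 then (1 : ℤ) else 0) * Bx k q.2 := by
    rw [Ax, Finset.card_filter]
    push_cast
    rw [sum_adt_succ (k + 1) ℓ]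
    refine Finset.sum_congr rfl fun p _ => ?_
    rw [sum_adt_succ k p.2]
    refine Finset.sum_congr rfl fun q _ => ?_
    rw [← IH q.2, Ax, Finset.card_filter]
    push_cast
    by_cases h : p.1 = q.1
    · rw [if_pos h, one_mul]
      refine Finset.sum_congr rfl fun t _ => ?_
      rw [if_congr (sym_cons k p.1 q.1 t) rfl rfl, if_congr (and_iff_right h) rfl rfl]
    · rw [if_neg h, zero_mul]
      apply Finset.sum_eq_zero
      intro t _
      rw [if_congr (sym_cons k p.1 q.1 t) rfl rfl, if_neg (fun hc => h hc.1)]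
  have hB : Bx (k + 2) ℓ = ∑ p ∈ Finset.HasAntidiagonal.antidiagonal ℓ, ∑ q ∈ Finset.HasAntidiagonal.antidiagonal p.2,
      (-1 : ℤ) ^ q.1 * Bx k q.2 := by
    rw [Bx, sum_adt_succ (k + 1) ℓ]
    refine Finset.sum_congr rfl fun p _ => ?_
    rw [sum_adt_succ k p.2]
    refine Finset.sum_congr rfl fun q _ => ?_
    rw [Bx, Finset.mul_sum]
    refine Finset.sum_congr rfl fun t _ => ?_
    rw [oddsum_cons, pow_add]
  rw [hA, hB, reassoc ℓ (fun a b r => (if a = b then (1 : ℤ) else 0) * Bx k r),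
    reassoc ℓ (fun a b r => (-1 : ℤ) ^ b * Bx k r)]
  refine Finset.sum_congr rfl fun p _ => ?_
  rw [← Finset.sum_mul, ← Finset.sum_mul, sum_diag, sum_sign2]

lemma key (k : ℕ) : ∀ ℓ, Ax k ℓ = Bx k ℓ := by
  induction k using Nat.strong_induction_on with
  | _ k ih =>
    match k with
    | 0 => exact key0
    | 1 => exact key1
    | k + 2 => exact fun ℓ => step k ℓ (ih k (by omega))

end CSPaux

/-- **Cyclic sieving phenomenon for type `C_n^(1)`.**
For `n ≥ 2` and `ℓ ≥ 0`, among the `(n+1)`-tuples `m` of nonnegative integers with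
`m_0 + ⋯ + m_n = ℓ`, the number of those with `m_{2j} = m_{2j+1}` whenever `2j+1 ≤ n`
equals `∑_m (-1)^(m_1 + m_3 + m_5 + ⋯)`. -/
theorem stmt_2 (n ℓ : ℕ) (hn : 2 ≤ n) :
    let X : Finset (Fin (n + 1) → ℕ) :=
      (Fintype.piFinset fun _ => Finset.range (ℓ + 1)).filter (fun m => ∑ i, m i = ℓ)
    ((X.filter (fun m => ∀ j : Fin (n + 1), ∀ h : 2 * (j : ℕ) + 1 ≤ n,
        m ⟨2 * (j : ℕ), by omega⟩ = m ⟨2 * (j : ℕ) + 1, by omega⟩)).card : ℤ)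
      = ∑ m ∈ X,
          (-1 : ℤ) ^ (∑ i ∈ Finset.univ.filter (fun i : Fin (n + 1) => (i : ℕ) % 2 = 1), m i) := by
  intro X
  classical
  have hX : X = Finset.Nat.antidiagonalTuple (n + 1) ℓ := by
    ext m
    simp only [show X = (Fintype.piFinset fun _ => Finset.range (ℓ + 1)).filter
      (fun m => ∑ i, m i = ℓ) from rfl, Finset.mem_filter, Fintype.mem_piFinset,
      Finset.mem_range, Finset.Nat.mem_antidiagonalTuple]
    constructor
    · exact fun h => h.2
    · intro h
      refine ⟨fun i => Nat.lt_succ_of_le ?_, h⟩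
      rw [← h]
      exact Finset.single_le_sum (fun _ _ => Nat.zero_le _) (Finset.mem_univ i)
  have hfilter : (X.filter (fun m => ∀ j : Fin (n + 1), ∀ h : 2 * (j : ℕ) + 1 ≤ n,
        m ⟨2 * (j : ℕ), by omega⟩ = m ⟨2 * (j : ℕ) + 1, by omega⟩))
      = (Finset.Nat.antidiagonalTuple (n + 1) ℓ).filter (CSPaux.Sym (n + 1)) := by
    rw [hX]
    apply Finset.filter_congr
    intro m _
    constructor
    · intro H j h
      exact H j (by omega)
    · intro H j h
      exact H j (by omega)
  rw [hfilter, hX]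
  exact CSPaux.key (n + 1) ℓ
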